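/- arXiv:1912.03155 — 3 statements merged into one kernel-verified Lean document; each statement's English description precedes it below -/
import Mathlib

section
/- Suppose U: [t₀,∞) → (0,∞) is nondecreasing and regularly varying at infinity with index γ > 0 (i.e., U(tz)/U(t) → z^γ for all z > 0). Then for every p ∈ [1,∞), the function A_p(t) = (∫₁^∞ |log(U(zt)/(z^γ U(t)))|^p z^{-2} dz)^{1/p} is bounded on [t₀,∞) and A_p(t) → 0 as t → ∞. -/
open MeasureTheory Filter Set

set_option maxHeartbeats 1000000 in
/-- if `U` is nondecreasing, positive on `[t₀,∞)` and regularly varying at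
infinity with index `γ > 0`, then `A_p(t) = (∫₁^∞ |log (U(zt)/(z^γ U(t)))|^p z⁻² dz)^{1/p}`
is bounded on `[t₀,∞)` and tends to `0` at infinity. -/
theorem Ap_bounded_and_tendsto_zero (U : ℝ → ℝ) (t₀ : ℝ) (ht₀ : 1 ≤ t₀)
    (hmono : MonotoneOn U (Set.Ici t₀)) (hpos : ∀ t, t₀ ≤ t → 0 < U t)
    (γ : ℝ) (hγ : 0 < γ)
    (hRV : ∀ z : ℝ, 0 < z → Tendsto (fun t => U (t * z) / U t) atTop (nhds (z ^ γ)))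
    (p : ℝ) (hp : 1 ≤ p) :
    (∃ C : ℝ, ∀ t, t₀ ≤ t →
        (∫ z in Set.Ioi (1:ℝ), |Real.log (U (z * t) / (z ^ γ * U t))| ^ p / z ^ 2) ^ (1/p)
          ≤ C) ∧
      Tendsto
        (fun t => (∫ z in Set.Ioi (1:ℝ),
            |Real.log (U (z * t) / (z ^ γ * U t))| ^ p / z ^ 2) ^ (1/p))
        atTop (nhds 0) := by
  have hp0 : (0:ℝ) < p := lt_of_lt_of_le one_pos hp
  set M : ℝ := (2:ℝ) ^ γ + 1 with hMdef
  have h2γpos : (0:ℝ) < (2:ℝ) ^ γ := Real.rpow_pos_of_pos two_pos γ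
  have h2γ1 : (1:ℝ) < (2:ℝ) ^ γ :=
    Real.one_lt_rpow_iff_of_pos two_pos |>.mpr (Or.inl ⟨one_lt_two, hγ⟩)
  have hM1 : (1:ℝ) < M := by simp only [hMdef]; linarith
  have hM0 : (0:ℝ) < M := lt_trans one_pos hM1
  have hMev : ∀ᶠ t in atTop, U (t * 2) / U t < M :=
    (hRV 2 two_pos).eventually_lt_const (by simp only [hMdef]; linarith)
  obtain ⟨T₁, hT₁⟩ := eventually_atTop.1 hMev
  set T : ℝ := max t₀ T₁ with hTdef
  have ht₀T : t₀ ≤ T := le_max_left _ _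
  have hT₁T : T₁ ≤ T := le_max_right _ _
  have hT1 : (1:ℝ) ≤ T := le_trans ht₀ ht₀T
  -- one doubling step
  have hstep : ∀ s : ℝ, T ≤ s → U (s * 2) ≤ M * U s := by
    intro s hs
    have hs₀ : t₀ ≤ s := le_trans ht₀T hs
    have hUs := hpos s hs₀
    have h := hT₁ s (le_trans hT₁T hs)
    rw [div_lt_iff₀ hUs] at h
    exact h.le
  -- chaining
  have hchain : ∀ n : ℕ, ∀ t : ℝ, T ≤ t → U ((2:ℝ) ^ n * t) ≤ M ^ n * U t := by
    intro n
    induction n with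
    | zero => intro t _; simp
    | succ n ih =>
      intro t ht
      have htpos : (0:ℝ) < t := lt_of_lt_of_le one_pos (le_trans hT1 ht)
      have h2n1 : (1:ℝ) ≤ (2:ℝ) ^ n := one_le_pow₀ one_le_two
      have h1 : T ≤ (2:ℝ) ^ n * t := le_trans ht (le_mul_of_one_le_left htpos.le h2n1)
      have heq : (2:ℝ) ^ (n+1) * t = ((2:ℝ) ^ n * t) * 2 := by ring
      have hUn : (0:ℝ) ≤ U ((2:ℝ) ^ n * t) - 0 := by
        have := hpos _ (le_trans ht₀T h1); linarith
      calc U ((2:ℝ) ^ (n+1) * t) = U (((2:ℝ) ^ n * t) * 2) := by rw [heq]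
        _ ≤ M * U ((2:ℝ) ^ n * t) := hstep _ h1
        _ ≤ M * (M ^ n * U t) := by
            have := ih t ht
            nlinarith
        _ = M ^ (n+1) * U t := by ring
  have hUTratio : (1:ℝ) ≤ U T / U t₀ :=
    (one_le_div (hpos t₀ le_rfl)).2 (hmono (mem_Ici.2 le_rfl) (mem_Ici.2 ht₀T) ht₀T)
  have hratiopos : (0:ℝ) < U T / U t₀ := lt_of_lt_of_le one_pos hUTratio
  -- main multiplicative bound
  have hmain : ∀ t : ℝ, t₀ ≤ t → ∀ z : ℝ, 1 ≤ z →
      U (z * t) ≤ (M ^ (Real.logb 2 z + 1) * (U T / U t₀)) * U t := by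
    intro t ht z hz
    have htpos : (0:ℝ) < t := lt_of_lt_of_le one_pos (le_trans ht₀ ht)
    have hz0 : (0:ℝ) < z := lt_of_lt_of_le one_pos hz
    set n : ℕ := ⌈Real.logb 2 z⌉₊ with hn
    have hlogb0 : 0 ≤ Real.logb 2 z := Real.logb_nonneg one_lt_two hz
    have hzn : z ≤ (2:ℝ) ^ n := by
      calc z = (2:ℝ) ^ (Real.logb 2 z) := (Real.rpow_logb two_pos (by norm_num) hz0).symm
        _ ≤ (2:ℝ) ^ ((n:ℝ)) := Real.rpow_le_rpow_of_exponent_le one_le_two (Nat.le_ceil _)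
        _ = (2:ℝ) ^ n := Real.rpow_natCast 2 n
    have hMn : (M:ℝ) ^ n ≤ M ^ (Real.logb 2 z + 1) := by
      rw [← Real.rpow_natCast M n]
      exact Real.rpow_le_rpow_of_exponent_le hM1.le (Nat.ceil_lt_add_one hlogb0).le
    have hMnpos : (0:ℝ) < M ^ n := pow_pos hM0 n
    have hzt₀ : t₀ ≤ z * t := le_trans ht (le_mul_of_one_le_left htpos.le hz)
    have hUt := hpos t ht
    rcases le_total T t with hTt | htT
    · -- t ≥ T : direct chaining
      have h2nt : t₀ ≤ (2:ℝ) ^ n * t :=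
        le_trans ht (le_mul_of_one_le_left htpos.le (one_le_pow₀ one_le_two))
      have h1 : U (z * t) ≤ U ((2:ℝ) ^ n * t) :=
        hmono (mem_Ici.2 hzt₀) (mem_Ici.2 h2nt) (mul_le_mul_of_nonneg_right hzn htpos.le)
      have h2 := hchain n t hTt
      have hMr : (0:ℝ) < M ^ (Real.logb 2 z + 1) := Real.rpow_pos_of_pos hM0 _
      calc U (z * t) ≤ M ^ n * U t := le_trans h1 h2
        _ ≤ M ^ (Real.logb 2 z + 1) * U t := mul_le_mul_of_nonneg_right hMn hUt.le
        _ ≤ (M ^ (Real.logb 2 z + 1) * (U T / U t₀)) * U t :=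
            mul_le_mul_of_nonneg_right (le_mul_of_one_le_right hMr.le hUTratio) hUt.le
    · -- t ≤ T : compare with T
      have hTpos : (0:ℝ) < T := lt_of_lt_of_le one_pos hT1
      have hzT₀ : t₀ ≤ z * T := le_trans ht₀T (le_mul_of_one_le_left hTpos.le hz)
      have h2nT : t₀ ≤ (2:ℝ) ^ n * T :=
        le_trans ht₀T (le_mul_of_one_le_left hTpos.le (one_le_pow₀ one_le_two))
      have h1 : U (z * t) ≤ U (z * T) :=
        hmono (mem_Ici.2 hzt₀) (mem_Ici.2 hzT₀) (mul_le_mul_of_nonneg_left htT hz0.le)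
      have h2 : U (z * T) ≤ U ((2:ℝ) ^ n * T) :=
        hmono (mem_Ici.2 hzT₀) (mem_Ici.2 h2nT) (mul_le_mul_of_nonneg_right hzn hTpos.le)
      have h3 := hchain n T le_rfl
      have h4 : U t₀ ≤ U t := hmono (mem_Ici.2 le_rfl) (mem_Ici.2 ht) ht
      have hUt₀ := hpos t₀ le_rfl
      have hUT := hpos T ht₀T
      have key : U (z * t) ≤ M ^ n * U T := le_trans h1 (le_trans h2 h3)
      have hMr : (0:ℝ) < M ^ (Real.logb 2 z + 1) := Real.rpow_pos_of_pos hM0 _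
      have h5 : M ^ n * U T ≤ M ^ (Real.logb 2 z + 1) * U T :=
        mul_le_mul_of_nonneg_right hMn hUT.le
      have h6 : M ^ (Real.logb 2 z + 1) * U T
          = (M ^ (Real.logb 2 z + 1) * (U T / U t₀)) * U t₀ := by
        field_simp
      have h7 : (M ^ (Real.logb 2 z + 1) * (U T / U t₀)) * U t₀
          ≤ (M ^ (Real.logb 2 z + 1) * (U T / U t₀)) * U t := by
        apply mul_le_mul_of_nonneg_left h4
        positivity
      linarith
  -- constants for the log bound
  set a : ℝ := Real.log M + Real.log (U T / U t₀) with hadef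
  set c : ℝ := Real.log M / Real.log 2 + γ with hcdef
  have hlogM : 0 < Real.log M := Real.log_pos hM1
  have hlog2 : 0 < Real.log 2 := Real.log_pos one_lt_two
  have ha0 : 0 ≤ a := by
    have := Real.log_nonneg hUTratio
    simp only [hadef]; linarith
  have hc0 : 0 < c := by
    have : 0 < Real.log M / Real.log 2 := div_pos hlogM hlog2
    simp only [hcdef]; linarith
  -- log bound
  have hbound : ∀ t : ℝ, t₀ ≤ t → ∀ z : ℝ, 1 ≤ z →
      |Real.log (U (z * t) / (z ^ γ * U t))| ≤ a + c * Real.log z := by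
    intro t ht z hz
    have hz0 : (0:ℝ) < z := lt_of_lt_of_le one_pos hz
    have hlz : 0 ≤ Real.log z := Real.log_nonneg hz
    have htpos : (0:ℝ) < t := lt_of_lt_of_le one_pos (le_trans ht₀ ht)
    have hzt₀ : t₀ ≤ z * t := le_trans ht (le_mul_of_one_le_left htpos.le hz)
    have hUzt := hpos _ hzt₀
    have hUt := hpos t ht
    have hdivpos : 0 < U (z * t) / U t := div_pos hUzt hUt
    have hL0 : 0 ≤ Real.log (U (z * t) / U t) :=
      Real.log_nonneg ((one_le_div hUt).2 (hmono (mem_Ici.2 ht) (mem_Ici.2 hzt₀)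
        (le_mul_of_one_le_left htpos.le hz)))
    have hLup : Real.log (U (z * t) / U t)
        ≤ (Real.log M / Real.log 2) * Real.log z + Real.log M + Real.log (U T / U t₀) := by
      have hmn := hmain t ht z hz
      have hMr : (0:ℝ) < M ^ (Real.logb 2 z + 1) := Real.rpow_pos_of_pos hM0 _
      have h1 : U (z * t) / U t ≤ M ^ (Real.logb 2 z + 1) * (U T / U t₀) :=
        (div_le_iff₀ hUt).2 hmn
      have h2 := Real.log_le_log hdivpos h1
      rw [Real.log_mul hMr.ne' hratiopos.ne', Real.log_rpow hM0, Real.logb] at h2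
      calc Real.log (U (z * t) / U t)
          ≤ (Real.log z / Real.log 2 + 1) * Real.log M + Real.log (U T / U t₀) := h2
        _ = (Real.log M / Real.log 2) * Real.log z + Real.log M + Real.log (U T / U t₀) := by
            field_simp
    have hzγ : (0:ℝ) < z ^ γ := Real.rpow_pos_of_pos hz0 γ
    have heq : Real.log (U (z * t) / (z ^ γ * U t))
        = Real.log (U (z * t) / U t) - γ * Real.log z := by
      rw [div_mul_eq_div_div_swap, Real.log_div hdivpos.ne' hzγ.ne', Real.log_rpow hz0]
    rw [heq, abs_le]
    have hγlz : 0 ≤ γ * Real.log z := mul_nonneg hγ.le hlz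
    have hclz : γ * Real.log z ≤ c * Real.log z := by
      apply mul_le_mul_of_nonneg_right _ hlz
      simp only [hcdef]
      have : 0 < Real.log M / Real.log 2 := div_pos hlogM hlog2
      linarith
    constructor
    · have : -(a + c * Real.log z) ≤ -(γ * Real.log z) := by linarith
      linarith
    · simp only [hadef, hcdef] at *
      nlinarith
  -- dominating function
  set K : ℝ := (a + 2 * p * c) ^ p with hKdef
  have haK : 0 ≤ a + 2 * p * c := by positivity
  have hK0 : 0 ≤ K := Real.rpow_nonneg haK p
  have hdom : ∀ t : ℝ, t₀ ≤ t → ∀ z : ℝ, 1 < z →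
      |Real.log (U (z * t) / (z ^ γ * U t))| ^ p / z ^ 2 ≤ K * z ^ (-(3/2) : ℝ) := by
    intro t ht z hz
    have hz0 : (0:ℝ) < z := lt_trans one_pos hz
    have hz1 : (1:ℝ) ≤ z ^ (1/(2*p) : ℝ) := Real.one_le_rpow hz.le (by positivity)
    have hlog : Real.log z ≤ 2 * p * z ^ (1/(2*p) : ℝ) := by
      have h1 : Real.log (z ^ (1/(2*p) : ℝ)) = (1/(2*p)) * Real.log z :=
        Real.log_rpow hz0 _
      have h2 : Real.log (z ^ (1/(2*p) : ℝ)) ≤ z ^ (1/(2*p) : ℝ) :=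
        Real.log_le_self (by positivity)
      rw [h1] at h2
      have h3 : 2 * p * ((1/(2*p)) * Real.log z) ≤ 2 * p * z ^ (1/(2*p) : ℝ) := by
        apply mul_le_mul_of_nonneg_left h2 (by positivity)
      have h4 : 2 * p * ((1/(2*p)) * Real.log z) = Real.log z := by
        field_simp
      linarith
    have hlz : 0 ≤ Real.log z := Real.log_nonneg hz.le
    have h1 : a + c * Real.log z ≤ (a + 2 * p * c) * z ^ (1/(2*p) : ℝ) := by
      have e1 : a ≤ a * z ^ (1/(2*p) : ℝ) := le_mul_of_one_le_right ha0 hz1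
      have e2 : c * Real.log z ≤ c * (2 * p * z ^ (1/(2*p) : ℝ)) :=
        mul_le_mul_of_nonneg_left hlog hc0.le
      nlinarith
    have h2 : |Real.log (U (z * t) / (z ^ γ * U t))| ^ p
        ≤ ((a + 2 * p * c) * z ^ (1/(2*p) : ℝ)) ^ p :=
      Real.rpow_le_rpow (abs_nonneg _) (le_trans (hbound t ht z hz.le) h1) hp0.le
    have h3 : ((a + 2 * p * c) * z ^ (1/(2*p) : ℝ)) ^ p = K * z ^ (1/2 : ℝ) := by
      rw [Real.mul_rpow haK (Real.rpow_nonneg hz0.le _), ← Real.rpow_mul hz0.le,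
        show (1/(2*p))*p = (1/2 : ℝ) by field_simp]
    have hz2 : (0:ℝ) < z ^ 2 := by positivity
    have h4 : |Real.log (U (z * t) / (z ^ γ * U t))| ^ p / z ^ 2
        ≤ (K * z ^ (1/2 : ℝ)) / z ^ 2 := by
      gcongr
      exact h2.trans h3.le
    have h5 : (K * z ^ (1/2 : ℝ)) / z ^ 2 = K * z ^ (-(3/2) : ℝ) := by
      rw [show (z:ℝ) ^ (2:ℕ) = z ^ ((2:ℕ):ℝ) from (Real.rpow_natCast z 2).symm,
        mul_div_assoc, ← Real.rpow_sub hz0]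
      norm_num
    linarith
  -- dominating function is integrable
  have hg : IntegrableOn (fun z : ℝ => K * z ^ (-(3/2) : ℝ)) (Ioi 1) :=
    (integrableOn_Ioi_rpow_of_lt (by norm_num) one_pos).const_mul K
  -- measurability of the integrand
  have hmeas : ∀ t : ℝ, t₀ ≤ t →
      AEStronglyMeasurable
        (fun z : ℝ => |Real.log (U (z * t) / (z ^ γ * U t))| ^ p / z ^ 2)
        (volume.restrict (Ioi (1:ℝ))) := by
    intro t ht
    have htpos : (0:ℝ) < t := lt_of_lt_of_le one_pos (le_trans ht₀ ht)
    have hUm : AEMeasurable (fun z : ℝ => U (z * t)) (volume.restrict (Ioi (1:ℝ))) := by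
      apply aemeasurable_restrict_of_monotoneOn measurableSet_Ioi
      intro x hx y hy hxy
      have hx1 : (1:ℝ) ≤ x := (mem_Ioi.1 hx).le
      have hy1 : (1:ℝ) ≤ y := (mem_Ioi.1 hy).le
      exact hmono
        (mem_Ici.2 (le_trans ht (le_mul_of_one_le_left htpos.le hx1)))
        (mem_Ici.2 (le_trans ht (le_mul_of_one_le_left htpos.le hy1)))
        (mul_le_mul_of_nonneg_right hxy htpos.le)
    have m1 : AEMeasurable (fun z : ℝ => U (z * t) / (z ^ γ * U t))
        (volume.restrict (Ioi (1:ℝ))) :=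
      hUm.div (((measurable_id.pow_const γ).mul_const (U t)).aemeasurable)
    have m2 : AEMeasurable (fun z : ℝ => |Real.log (U (z * t) / (z ^ γ * U t))| ^ p)
        (volume.restrict (Ioi (1:ℝ))) :=
      (measurable_abs.comp_aemeasurable (Real.measurable_log.comp_aemeasurable m1)).pow
        aemeasurable_const
    exact (m2.div ((measurable_id.pow_const 2).aemeasurable)).aestronglyMeasurable
  -- integrability of the integrand
  have hint : ∀ t : ℝ, t₀ ≤ t →
      IntegrableOn
        (fun z : ℝ => |Real.log (U (z * t) / (z ^ γ * U t))| ^ p / z ^ 2)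
        (Ioi (1:ℝ)) := by
    intro t ht
    apply Integrable.mono' hg (hmeas t ht)
    filter_upwards [ae_restrict_mem measurableSet_Ioi] with z hz
    rw [Real.norm_eq_abs, abs_of_nonneg (by positivity)]
    exact hdom t ht z hz
  constructor
  · -- boundedness
    refine ⟨(∫ z in Ioi (1:ℝ), K * z ^ (-(3/2) : ℝ)) ^ (1/p), fun t ht => ?_⟩
    apply Real.rpow_le_rpow
    · exact integral_nonneg fun z => by positivity
    · exact setIntegral_mono_on (hint t ht) hg measurableSet_Ioi
        (fun z hz => hdom t ht z (mem_Ioi.1 hz))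
    · positivity
  · -- convergence to zero
    have hI : Tendsto
        (fun t => ∫ z in Ioi (1:ℝ), |Real.log (U (z * t) / (z ^ γ * U t))| ^ p / z ^ 2)
        atTop (nhds 0) := by
      have hmeas' : ∀ᶠ t in atTop,
          AEStronglyMeasurable
            (fun z : ℝ => |Real.log (U (z * t) / (z ^ γ * U t))| ^ p / z ^ 2)
            (volume.restrict (Ioi (1:ℝ))) :=
        (eventually_ge_atTop t₀).mono hmeas
      have hb : ∀ᶠ t in atTop, ∀ᵐ z ∂(volume.restrict (Ioi (1:ℝ))),
          ‖|Real.log (U (z * t) / (z ^ γ * U t))| ^ p / z ^ 2‖ ≤ K * z ^ (-(3/2) : ℝ) := by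
        filter_upwards [eventually_ge_atTop t₀] with t ht
        filter_upwards [ae_restrict_mem measurableSet_Ioi] with z hz
        rw [Real.norm_eq_abs, abs_of_nonneg (by positivity)]
        exact hdom t ht z hz
      have hlim : ∀ᵐ z ∂(volume.restrict (Ioi (1:ℝ))),
          Tendsto (fun t => |Real.log (U (z * t) / (z ^ γ * U t))| ^ p / z ^ 2)
            atTop (nhds 0) := by
        filter_upwards [ae_restrict_mem measurableSet_Ioi] with z hz
        have hz0 : (0:ℝ) < z := lt_trans one_pos (mem_Ioi.1 hz)
        have hzγ : (0:ℝ) < z ^ γ := Real.rpow_pos_of_pos hz0 γ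
        have h1 : Tendsto (fun t => U (z * t) / U t) atTop (nhds (z ^ γ)) := by
          have := hRV z hz0
          simpa [mul_comm] using this
        have h2 : Tendsto (fun t => U (z * t) / (z ^ γ * U t)) atTop (nhds 1) := by
          have h2' := h1.div_const (z ^ γ)
          rw [div_self hzγ.ne'] at h2'
          have heq : (fun t => U (z * t) / U t / z ^ γ)
              = fun t => U (z * t) / (z ^ γ * U t) := by
            funext t
            rw [div_div, mul_comm (U t) (z ^ γ)]
          rwa [heq] at h2'
        have h3 : Tendsto (fun t => Real.log (U (z * t) / (z ^ γ * U t)))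
            atTop (nhds 0) := by
          have := (Real.continuousAt_log one_ne_zero).tendsto.comp h2
          simpa [Function.comp_def] using this
        have h4 : Tendsto (fun t => |Real.log (U (z * t) / (z ^ γ * U t))|)
            atTop (nhds 0) := by
          have := h3.abs
          simpa using this
        have h5 : Tendsto (fun t => |Real.log (U (z * t) / (z ^ γ * U t))| ^ p)
            atTop (nhds 0) := by
          have hcc := (Real.continuousAt_rpow_const 0 p (Or.inr hp0.le)).tendsto
          have := hcc.comp h4
          simpa [Function.comp_def, Real.zero_rpow hp0.ne'] using this
        have := h5.div_const (z ^ 2)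
        simpa using this
      have := tendsto_integral_filter_of_dominated_convergence _ hmeas' hb hg hlim
      simpa using this
    have hcc := (Real.continuousAt_rpow_const 0 (1/p) (Or.inr (by positivity))).tendsto
    have := hcc.comp hI
    simpa [Function.comp_def, Real.zero_rpow (one_div_ne_zero hp0.ne'),
      Real.zero_rpow (inv_ne_zero hp0.ne')] using this
end

section
/- Under the second order condition with ρ = 0 and p = ∞, the ratio A_∞(t)/A(t) tends to +∞ as t → ∞, where A_∞(t) = sup_{z>1} |log(U(zt)/(z^γ U(t)))|. -/
open MeasureTheory Filter Set ENNReal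

/-- under the second order condition with `ρ = 0`, the ratio
`A_∞(t)/A(t)` tends to `+∞`, where `A_∞(t) = sup_{z>1} |log (U(zt)/(z^γ U(t)))|`. -/
theorem Ainfty_div_A_tendsto_top (U A : ℝ → ℝ) (γ : ℝ) (hγ : 0 < γ)
    (hA0 : Tendsto A atTop (nhds 0))
    (hApos : ∀ᶠ t in atTop, 0 < A t)
    (hArv : ∀ x : ℝ, 0 < x → Tendsto (fun t => A (t * x) / A t) atTop (nhds 1))
    (hUpos : ∀ᶠ t in atTop, 0 < U t)
    (h2nd : ∀ x : ℝ, 0 < x →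
      Tendsto (fun t => (U (t * x) / U t - x ^ γ) / (x ^ γ * A t)) atTop
        (nhds (Real.log x))) :
    Tendsto
      (fun t =>
        (⨆ (z : ℝ) (_ : 1 < z), ENNReal.ofReal |Real.log (U (z * t) / (z ^ γ * U t))|)
          / ENNReal.ofReal (A t))
      atTop (nhds ⊤) := by
  rw [ENNReal.tendsto_nhds_top_iff_nat]
  intro n
  set w : ℝ := Real.exp ((n : ℝ) + 2) with hwdef
  have hw1 : 1 < w := by
    rw [hwdef]
    have h0 : (0:ℝ) < (n:ℝ) + 2 := by positivity
    calc (1:ℝ) = Real.exp 0 := Real.exp_zero.symm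
      _ < Real.exp ((n:ℝ) + 2) := Real.exp_lt_exp.mpr h0
  have hw0 : (0:ℝ) < w := lt_trans one_pos hw1
  have hlogw : (n:ℝ) + 1 < Real.log w := by
    rw [hwdef, Real.log_exp]; linarith
  have hwγ : (0:ℝ) < w ^ γ := Real.rpow_pos_of_pos hw0 γ
  set r : ℝ → ℝ := fun t => U (w * t) / (w ^ γ * U t) with hrdef
  have key : Tendsto (fun t => (r t - 1) / A t) atTop (nhds (Real.log w)) := by
    apply (h2nd w hw0).congr'
    filter_upwards [hUpos, hApos] with t hU hA
    rw [hrdef]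
    simp only [mul_comm t w]
    field_simp
  have hr1 : Tendsto r atTop (nhds 1) := by
    have h2 : Tendsto (fun t => (r t - 1) / A t * A t + 1) atTop
        (nhds (Real.log w * 0 + 1)) := (key.mul hA0).add tendsto_const_nhds
    rw [mul_zero, zero_add] at h2
    apply h2.congr'
    filter_upwards [hApos] with t hA
    rw [div_mul_cancel₀ _ hA.ne', sub_add_cancel]
  have hev : ∀ᶠ t in atTop, 1 < r t := by
    have hpos : ∀ᶠ t in atTop, 0 < (r t - 1) / A t :=
      key.eventually (eventually_gt_nhds (by linarith : (0:ℝ) < Real.log w))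
    filter_upwards [hpos, hApos] with t h1 h2
    have := mul_pos h1 h2
    rw [div_mul_cancel₀ _ h2.ne'] at this
    linarith
  have hslope : Tendsto (fun t => Real.log (r t) / A t) atTop (nhds (Real.log w)) := by
    have hsl : Tendsto (fun x : ℝ => Real.log x / (x - 1))
        (nhdsWithin 1 {(1:ℝ)}ᶜ) (nhds 1) := by
      have h := hasDerivAt_iff_tendsto_slope.mp (Real.hasDerivAt_log one_ne_zero)
      simpa [slope_fun_def, Real.log_one, div_eq_inv_mul] using h
    have hrW : Tendsto r atTop (nhdsWithin 1 {(1:ℝ)}ᶜ) := by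
      apply tendsto_nhdsWithin_of_tendsto_nhds_of_eventually_within _ hr1
      filter_upwards [hev] with t ht
      exact (ne_of_gt ht)
    have h1 : Tendsto (fun t => Real.log (r t) / (r t - 1)) atTop (nhds 1) :=
      hsl.comp hrW
    have h2 := h1.mul key
    rw [one_mul] at h2
    apply h2.congr'
    filter_upwards [hev] with t ht
    have hne : r t - 1 ≠ 0 := by linarith
    rw [div_mul_div_comm, mul_comm (r t - 1) (A t), mul_div_mul_right _ _ hne]
  have hfin : ∀ᶠ t in atTop, (n:ℝ) < Real.log (r t) / A t :=
    hslope.eventually (eventually_gt_nhds (by linarith : (n:ℝ) < Real.log w))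
  filter_upwards [hfin, hApos, hev] with t hn hAt hrt
  have hlogr : 0 ≤ Real.log (r t) := Real.log_nonneg (le_of_lt hrt)
  have hle : ENNReal.ofReal |Real.log (r t)| ≤
      ⨆ (z : ℝ) (_ : 1 < z), ENNReal.ofReal |Real.log (U (z * t) / (z ^ γ * U t))| :=
    le_iSup₂ (f := fun (z : ℝ) (_ : 1 < z) =>
      ENNReal.ofReal |Real.log (U (z * t) / (z ^ γ * U t))|) w hw1
  calc (n : ℝ≥0∞) = ENNReal.ofReal (n : ℝ) := (ENNReal.ofReal_natCast n).symm
    _ < ENNReal.ofReal (Real.log (r t) / A t) := by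
        rw [ENNReal.ofReal_lt_ofReal_iff (lt_of_le_of_lt (Nat.cast_nonneg n) hn)]
        exact hn
    _ = ENNReal.ofReal (Real.log (r t)) / ENNReal.ofReal (A t) :=
        ENNReal.ofReal_div_of_pos hAt
    _ = ENNReal.ofReal |Real.log (r t)| / ENNReal.ofReal (A t) := by
        rw [abs_of_nonneg hlogr]
    _ ≤ (⨆ (z : ℝ) (_ : 1 < z),
          ENNReal.ofReal |Real.log (U (z * t) / (z ^ γ * U t))|) / ENNReal.ofReal (A t) :=
        ENNReal.div_le_div_right hle _
end

section
/- Let V be nondecreasing, bounded on [0,1] (finite left endpoint), satisfying the first order condition (V(tx) − V(t))/a(t) → (x^γ − 1)/γ for all x > 0 with γ < 1, a > 0 regularly varying of index γ. Then for p ∈ [1, 1/max(γ,0)), A''_p(m) := (∫₀^∞ |(V(mz) − V(m))/a(m) − (z^γ − 1)/γ|^p e^{−1/z} z^{−2} dz)^{1/p} → 0 as m → ∞. -/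
open MeasureTheory Filter Set

private noncomputable def psiAux (γ x : ℝ) : ℝ := if γ = 0 then Real.log x else (x ^ γ - 1) / γ

private lemma nat_mul_pow_le (b dd : ℝ) (hdd : 0 < dd) (n : ℕ) :
    (n : ℝ) * ((2:ℝ)^b)^n ≤ (1/dd) * ((2:ℝ)^(b + 2*dd))^n := by
  have hlog2 : (1:ℝ) ≤ 2 * Real.log 2 := by
    have := Real.log_two_gt_d9; nlinarith
  have hn0 : (0:ℝ) ≤ (n:ℝ) := Nat.cast_nonneg n
  have h1 : (n:ℝ) * dd ≤ Real.exp ((n:ℝ) * dd) := by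
    nlinarith [Real.add_one_le_exp ((n:ℝ) * dd)]
  have h2 : Real.exp ((n:ℝ) * dd) ≤ Real.exp ((n:ℝ) * (Real.log 2 * (2*dd))) := by
    apply Real.exp_le_exp.2
    have hstep : dd ≤ Real.log 2 * (2*dd) := by nlinarith
    exact mul_le_mul_of_nonneg_left hstep hn0
  have h3 : Real.exp ((n:ℝ) * (Real.log 2 * (2*dd))) = ((2:ℝ)^(2*dd))^n := by
    rw [Real.exp_nat_mul, Real.rpow_def_of_pos (by norm_num : (0:ℝ) < 2)]
  have h4 : (n:ℝ) ≤ (1/dd) * ((2:ℝ)^(2*dd))^n := by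
    rw [← h3, div_mul_eq_mul_div, one_mul, le_div_iff₀ hdd]
    calc (n:ℝ) * dd ≤ Real.exp ((n:ℝ) * dd) := h1
      _ ≤ Real.exp ((n:ℝ) * (Real.log 2 * (2*dd))) := h2
  have hb : (0:ℝ) ≤ ((2:ℝ)^b)^n := pow_nonneg (Real.rpow_nonneg (by norm_num) _) n
  calc (n:ℝ) * ((2:ℝ)^b)^n ≤ ((1/dd) * ((2:ℝ)^(2*dd))^n) * ((2:ℝ)^b)^n :=
        mul_le_mul_of_nonneg_right h4 hb
    _ = (1/dd) * (((2:ℝ)^(2*dd)) * ((2:ℝ)^b))^n := by rw [mul_pow]; ring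
    _ = (1/dd) * ((2:ℝ)^(b + 2*dd))^n := by
        rw [← Real.rpow_add (by norm_num : (0:ℝ) < 2), add_comm]

private lemma pow_rpow_comm (c : ℝ) (n : ℕ) : ((2:ℝ)^c)^n = ((2:ℝ)^n)^c := by
  rw [← Real.rpow_natCast ((2:ℝ)^c) n, ← Real.rpow_natCast (2:ℝ) n,
    ← Real.rpow_mul (by norm_num : (0:ℝ) ≤ 2), ← Real.rpow_mul (by norm_num : (0:ℝ) ≤ 2),
    mul_comm]

private lemma exists_dyadic {z : ℝ} (hz : 1 ≤ z) : ∃ n : ℕ, z ≤ 2^n ∧ (2:ℝ)^n ≤ 2*z := by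
  refine ⟨⌈Real.logb 2 z⌉₊, ?_, ?_⟩
  · have h1 : Real.logb 2 z ≤ (⌈Real.logb 2 z⌉₊ : ℝ) := Nat.le_ceil _
    have := Real.rpow_le_rpow_of_exponent_le (by norm_num : (1:ℝ) ≤ 2) h1
    rwa [Real.rpow_logb (by norm_num) (by norm_num) (by linarith), Real.rpow_natCast] at this
  · have h0 : 0 ≤ Real.logb 2 z := Real.logb_nonneg (by norm_num) hz
    have h1 : (⌈Real.logb 2 z⌉₊ : ℝ) ≤ Real.logb 2 z + 1 := le_of_lt (Nat.ceil_lt_add_one h0)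
    have := Real.rpow_le_rpow_of_exponent_le (by norm_num : (1:ℝ) ≤ 2) h1
    rwa [Real.rpow_add (by norm_num : (0:ℝ) < 2), Real.rpow_one,
      Real.rpow_logb (by norm_num) (by norm_num) (by linarith), mul_comm,
      Real.rpow_natCast] at this

private lemma chain_up (V a : ℝ → ℝ) (T C r : ℝ) (hr : 1 ≤ r) (hC : 0 ≤ C)
    (hT : 1 ≤ T) (ha : ∀ t, T ≤ t → 0 < a t)
    (hstep : ∀ t, T ≤ t → V (t*2) - V t ≤ C * a t ∧ a (t*2) ≤ r * a t) :
    ∀ n : ℕ, ∀ t, T ≤ t → V (t * 2^n) - V t ≤ C * n * r^n * a t ∧ a (t * 2^n) ≤ r^n * a t := by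
  intro n
  induction n with
  | zero => intro t ht; simp
  | succ n ih =>
    intro t ht
    have ht0 : 0 < t := lt_of_lt_of_le one_pos (le_trans hT ht)
    have ht2 : T ≤ t * 2 := le_trans ht (by nlinarith)
    have hrw : t * 2^(n+1) = (t*2) * 2^n := by ring
    obtain ⟨ihV, iha⟩ := ih (t*2) ht2
    obtain ⟨hsV, hsa⟩ := hstep t ht
    have har : 0 < a t := ha t ht
    have hrn : (0:ℝ) < r^n := pow_pos (lt_of_lt_of_le one_pos hr) n
    have hrn1 : (1:ℝ) ≤ r^(n+1) := one_le_pow₀ hr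
    have hkey : (0:ℝ) ≤ C * a t * (r^(n+1) - 1) :=
      mul_nonneg (mul_nonneg hC har.le) (by linarith)
    constructor
    · have hsplit : V (t * 2^(n+1)) - V t = (V ((t*2) * 2^n) - V (t*2)) + (V (t*2) - V t) := by
        rw [hrw]; ring
      rw [hsplit]
      have h2 : C * n * r^n * a (t*2) ≤ C * n * r^n * (r * a t) :=
        mul_le_mul_of_nonneg_left hsa (by positivity)
      have : (V ((t*2) * 2^n) - V (t*2)) + (V (t*2) - V t)
          ≤ C * n * r^(n+1) * a t + C * a t := by
        have : C * n * r^n * (r * a t) = C * n * r^(n+1) * a t := by ring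
        linarith [this ▸ h2]
      calc (V ((t*2) * 2^n) - V (t*2)) + (V (t*2) - V t)
          ≤ C * n * r^(n+1) * a t + C * a t := this
        _ ≤ C * ((n:ℝ)+1) * r^(n+1) * a t := by nlinarith
        _ = C * ((n+1 : ℕ) : ℝ) * r^(n+1) * a t := by push_cast; ring
    · rw [hrw]
      calc a ((t*2) * 2^n) ≤ r^n * a (t*2) := iha
        _ ≤ r^n * (r * a t) := mul_le_mul_of_nonneg_left hsa hrn.le
        _ = r^(n+1) * a t := by ring

private lemma chain_down (V a : ℝ → ℝ) (T C ρ : ℝ) (hρ : 1 ≤ ρ) (hC : 0 ≤ C) (hT : 1 ≤ T)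
    (ha : ∀ t, T ≤ t → 0 < a t)
    (hstep : ∀ t, T ≤ t → V t - V (t/2) ≤ C * a t ∧ a (t/2) ≤ ρ * a t) :
    ∀ n : ℕ, ∀ t, T ≤ t / 2^n → V t - V (t/2^n) ≤ C * n * ρ^n * a t := by
  intro n
  induction n with
  | zero => intro t ht; simp
  | succ n ih =>
    intro t ht
    have h2n : (0:ℝ) < 2^(n+1) := by positivity
    have hdivpos : (0:ℝ) < t / 2^(n+1) := lt_of_lt_of_le (lt_of_lt_of_le one_pos hT) ht
    have ht0 : 0 < t := by
      have h := mul_pos hdivpos h2n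
      rwa [div_mul_cancel₀ _ (ne_of_gt h2n)] at h
    have htT : T ≤ t := by
      calc T ≤ t / 2^(n+1) := ht
        _ ≤ t := by
          rw [div_le_iff₀ h2n]
          nlinarith [one_le_pow₀ (show (1:ℝ) ≤ 2 by norm_num) (n := n+1)]
    have hrw : t / 2^(n+1) = (t/2) / 2^n := by
      rw [div_div]; ring_nf
    have hhalf : T ≤ (t/2) / 2^n := by rw [← hrw]; exact ht
    obtain ⟨hsV, hsa⟩ := hstep t htT
    have ihv := ih (t/2) hhalf
    have har : 0 < a t := ha t htT
    have hρn : (0:ℝ) < ρ^n := pow_pos (lt_of_lt_of_le one_pos hρ) n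
    have hρn1 : (1:ℝ) ≤ ρ^(n+1) := one_le_pow₀ hρ
    have hkey : (0:ℝ) ≤ C * a t * (ρ^(n+1) - 1) :=
      mul_nonneg (mul_nonneg hC har.le) (by linarith)
    have hsplit : V t - V (t/2^(n+1)) = (V t - V (t/2)) + (V (t/2) - V ((t/2)/2^n)) := by
      rw [hrw]; ring
    rw [hsplit]
    have h2 : C * n * ρ^n * a (t/2) ≤ C * n * ρ^n * (ρ * a t) :=
      mul_le_mul_of_nonneg_left hsa (by positivity)
    have heq : C * n * ρ^n * (ρ * a t) = C * n * ρ^(n+1) * a t := by ring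
    calc (V t - V (t/2)) + (V (t/2) - V ((t/2)/2^n))
        ≤ C * a t + C * n * ρ^(n+1) * a t := by linarith [heq ▸ h2]
      _ ≤ C * ((n:ℝ)+1) * ρ^(n+1) * a t := by nlinarith
      _ = C * ((n+1 : ℕ) : ℝ) * ρ^(n+1) * a t := by push_cast; ring

private lemma chain_low (a : ℝ → ℝ) (T q : ℝ) (hq : 0 ≤ q) (hT : 1 ≤ T)
    (hstep : ∀ t, T ≤ t → q * a t ≤ a (t*2)) :
    ∀ n : ℕ, q^n * a T ≤ a (T * 2^n) := by
  intro n
  induction n with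
  | zero => simp
  | succ n ih =>
    have hT2 : T ≤ T * 2^n := by
      nlinarith [one_le_pow₀ (show (1:ℝ) ≤ 2 by norm_num) (n := n)]
    have h1 := hstep (T * 2^n) hT2
    have hrw : T * 2^(n+1) = (T * 2^n) * 2 := by ring
    rw [hrw]
    calc q^(n+1) * a T = q * (q^n * a T) := by ring
      _ ≤ q * a (T * 2^n) := mul_le_mul_of_nonneg_left ih hq
      _ ≤ a ((T * 2^n) * 2) := h1

private lemma add_rpow_le {x y P : ℝ} (hx : 0 ≤ x) (hy : 0 ≤ y) (hP : 0 ≤ P) :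
    (x + y)^P ≤ 2^P * (x^P + y^P) := by
  have h2P : (0:ℝ) ≤ (2:ℝ)^P := Real.rpow_nonneg (by norm_num) P
  rcases le_total x y with h | h
  · calc (x+y)^P ≤ (2*y)^P := Real.rpow_le_rpow (by linarith) (by linarith) hP
      _ = 2^P * y^P := Real.mul_rpow (by norm_num) hy
      _ ≤ 2^P * (x^P + y^P) := by
          nlinarith [Real.rpow_nonneg hx P]
  · calc (x+y)^P ≤ (2*x)^P := Real.rpow_le_rpow (by linarith) (by linarith) hP
      _ = 2^P * x^P := Real.mul_rpow (by norm_num) hx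
      _ ≤ 2^P * (x^P + y^P) := by
          nlinarith [Real.rpow_nonneg hy P]
set_option maxHeartbeats 1000000 in
/-- if `V` is nondecreasing and bounded on `(0,1]` (finite left endpoint),
satisfies the first order condition `(V(tx) - V(t))/a(t) → (x^γ - 1)/γ` for all `x > 0`
(interpreted as `log x` for `γ = 0`) with `γ < 1` and `a > 0` regularly varying of index
`γ`, then for `p ∈ [1, 1/max(γ,0))`,
`A''_p(m) = (∫₀^∞ |(V(mz) - V(m))/a(m) - (z^γ - 1)/γ|^p e^{-1/z} z⁻² dz)^{1/p} → 0` as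
`m → ∞`. -/
theorem App_tendsto_zero (V a : ℝ → ℝ) (hV : Monotone V)
    (hVbdd : ∃ M : ℝ, ∀ t ∈ Set.Ioc (0:ℝ) 1, |V t| ≤ M)
    (γ : ℝ) (hγ : γ < 1) (hapos : ∀ᶠ t in atTop, 0 < a t)
    (haRV : ∀ x : ℝ, 0 < x → Tendsto (fun t => a (t * x) / a t) atTop (nhds (x ^ γ)))
    (hfo : ∀ x : ℝ, 0 < x →
      Tendsto (fun t => (V (t * x) - V t) / a t) atTop
        (nhds (if γ = 0 then Real.log x else (x ^ γ - 1) / γ)))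
    (p : ℝ) (hp1 : 1 ≤ p) (hpγ : p * max γ 0 < 1) :
    Tendsto
      (fun m =>
        (∫ z in Set.Ioi (0:ℝ),
            |(V (m * z) - V m) / a m -
              (if γ = 0 then Real.log z else (z ^ γ - 1) / γ)| ^ p *
              Real.exp (-1 / z) / z ^ 2) ^ (1/p))
      atTop (nhds 0) := by
  have hfo' : ∀ x : ℝ, 0 < x → Tendsto (fun t => (V (t * x) - V t) / a t) atTop
      (nhds (psiAux γ x)) := hfo
  obtain ⟨M, hM⟩ := hVbdd
  have hM0 : 0 ≤ M := le_trans (abs_nonneg _) (hM 1 (by norm_num))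
  have hVlow : ∀ s : ℝ, 0 < s → -M ≤ V s := by
    intro s hs
    rcases le_or_gt s 1 with h | h
    · exact (abs_le.1 (hM s ⟨hs, h⟩)).1
    · exact le_trans (abs_le.1 (hM 1 (by norm_num))).1 (hV h.le)
  have hp0 : 0 < p := lt_of_lt_of_le one_pos hp1
  -- exponents
  set θ₀ : ℝ := max γ 0 with hθ₀def
  have hθ₀0 : 0 ≤ θ₀ := le_max_right _ _
  have hγθ₀ : γ ≤ θ₀ := le_max_left _ _
  have hpθ₀ : p * θ₀ < 1 := hpγ
  set d : ℝ := (1 - p*θ₀)/(4*p) with hddef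
  have hd : 0 < d := div_pos (by linarith only [hpθ₀]) (by linarith only [hp0])
  have hpd : p * d = (1 - p*θ₀)/4 := by
    rw [hddef]; field_simp
  set θ : ℝ := θ₀ + 3*d with hθdef
  have hθpos : 0 < θ := by rw [hθdef]; linarith only [hθ₀0, hd]
  have hγθ : γ ≤ θ := by rw [hθdef]; linarith only [hγθ₀, hd]
  have hpθ : p * θ < 1 := by
    have h1 : p * θ = p*θ₀ + 3*(p*d) := by rw [hθdef]; ring
    rw [h1, hpd]; linarith only [hpθ₀]
  set β : ℝ := max (-γ) 0 + 3 with hβdef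
  have hβ3 : 3 ≤ β := by
    have : (0:ℝ) ≤ max (-γ) 0 := le_max_right _ _
    linarith
  have hβγ : -γ ≤ β := by
    have : -γ ≤ max (-γ) 0 := le_max_left _ _
    linarith
  set B : ℝ := max β (1-γ) with hBdef
  have hβB : β ≤ B := le_max_left _ _
  have h1γB : 1-γ ≤ B := le_max_right _ _
  have hB3 : 3 ≤ B := le_trans hβ3 hβB
  have hB1 : 1 ≤ B := by linarith
  have hB0 : 0 ≤ B := by linarith
  have hBγ : -γ ≤ B := le_trans hβγ hβB
  -- psi positivity at 2
  have hψ2pos : 0 < psiAux γ 2 := by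
    unfold psiAux
    split_ifs with h
    · exact Real.log_pos one_lt_two
    · rcases lt_or_gt_of_ne h with hneg | hpos
      · have h2 : (2:ℝ)^γ < 1 := Real.rpow_lt_one_of_one_lt_of_neg one_lt_two hneg
        have := div_pos (neg_pos.2 (by linarith : (2:ℝ)^γ - 1 < 0)) (neg_pos.2 hneg)
        rwa [neg_div_neg_eq] at this
      · have h2 : 1 < (2:ℝ)^γ := by
          rw [Real.one_lt_rpow_iff_of_pos (by norm_num)]
          exact Or.inl ⟨one_lt_two, hpos⟩
        exact div_pos (by linarith) hpos
  -- constants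
  set C₂ : ℝ := |psiAux γ 2| + 1 with hC₂def
  set C₄ : ℝ := |psiAux γ 4| + 1 with hC₄def
  set C₇ : ℝ := |psiAux γ (1/2)| + 1 with hC₇def
  set σ : ℝ := psiAux γ 2 / 2 with hσdef
  set r : ℝ := (2:ℝ)^(θ₀ + d) with hrdef
  set ρ : ℝ := (2:ℝ)^(max (-γ) 0 + 1) with hρdef
  set q : ℝ := (2:ℝ)^(γ-1) with hqdef
  have hC₂pos : 0 < C₂ := by rw [hC₂def]; positivity
  have hC₄pos : 0 < C₄ := by rw [hC₄def]; positivity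
  have hC₇pos : 0 < C₇ := by rw [hC₇def]; positivity
  have hσpos : 0 < σ := by rw [hσdef]; linarith
  have hr1 : 1 ≤ r := by
    rw [hrdef]; exact Real.one_le_rpow one_le_two (by linarith)
  have hρ1 : 1 ≤ ρ := by
    rw [hρdef]
    exact Real.one_le_rpow one_le_two (by positivity)
  have hq0 : 0 ≤ q := by rw [hqdef]; positivity
  -- the eventual bundle
  have e2 : ∀ᶠ t in atTop, (V (t*2) - V t)/a t < C₂ :=
    (hfo' 2 (by norm_num)).eventually (eventually_lt_nhds
      (lt_of_le_of_lt (le_abs_self _) (lt_add_one _)))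
  have e3 : ∀ᶠ t in atTop, σ < (V (t*2) - V t)/a t :=
    (hfo' 2 (by norm_num)).eventually (eventually_gt_nhds (by rw [hσdef]; linarith))
  have e4 : ∀ᶠ t in atTop, (V (t*4) - V t)/a t < C₄ :=
    (hfo' 4 (by norm_num)).eventually (eventually_lt_nhds
      (lt_of_le_of_lt (le_abs_self _) (lt_add_one _)))
  have e5 : ∀ᶠ t in atTop, psiAux γ (1/2) - 1 < (V (t*(1/2)) - V t)/a t :=
    (hfo' (1/2) (by norm_num)).eventually (eventually_gt_nhds (by linarith))
  have e6 : ∀ᶠ t in atTop, a (t*2)/a t < r := by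
    apply (haRV 2 (by norm_num)).eventually (eventually_lt_nhds _)
    rw [hrdef]
    exact (Real.rpow_lt_rpow_left_iff one_lt_two).2 (by linarith only [hγθ₀, hd])
  have e7 : ∀ᶠ t in atTop, q < a (t*2)/a t := by
    apply (haRV 2 (by norm_num)).eventually (eventually_gt_nhds _)
    rw [hqdef]
    exact (Real.rpow_lt_rpow_left_iff one_lt_two).2 (by linarith)
  have e8 : ∀ᶠ t in atTop, a (t*(1/2))/a t < ρ := by
    apply (haRV (1/2) (by norm_num)).eventually (eventually_lt_nhds _)
    have hhalf : ((1:ℝ)/2)^γ = (2:ℝ)^(-γ) := by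
      rw [one_div, Real.inv_rpow (by norm_num : (0:ℝ) ≤ 2), ← Real.rpow_neg (by norm_num)]
    rw [hhalf, hρdef]
    apply (Real.rpow_lt_rpow_left_iff one_lt_two).2
    have : -γ ≤ max (-γ) 0 := le_max_left _ _
    linarith
  obtain ⟨T₁, hT₁⟩ := Filter.eventually_atTop.mp
    (hapos.and (e2.and (e3.and (e4.and (e5.and (e6.and (e7.and e8)))))))
  set T : ℝ := max T₁ 1 with hTdef
  have hT1 : 1 ≤ T := le_max_right _ _
  have hT0 : 0 < T := lt_of_lt_of_le one_pos hT1
  have key : ∀ t, T ≤ t → 0 < a t ∧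
      V (t*2) - V t ≤ C₂ * a t ∧ σ * a t ≤ V (t*2) - V t ∧
      V (t*4) - V t ≤ C₄ * a t ∧ V t - V (t/2) ≤ C₇ * a t ∧
      a (t*2) ≤ r * a t ∧ q * a t ≤ a (t*2) ∧ a (t/2) ≤ ρ * a t := by
    intro t ht
    obtain ⟨h0, h2, h3, h4, h5, h6, h7, h8⟩ := hT₁ t (le_trans (le_max_left _ _) ht)
    rw [div_lt_iff₀ h0] at h2 h4
    rw [lt_div_iff₀ h0] at h3 h5
    rw [mul_one_div] at h5 h8
    rw [div_lt_iff₀ h0] at h6 h8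
    rw [lt_div_iff₀ h0] at h7
    have hC : 1 - psiAux γ (1/2) ≤ C₇ := by
      rw [hC₇def]; linarith [neg_abs_le (psiAux γ (1/2))]
    have hC' : (1 - psiAux γ (1/2)) * a t ≤ C₇ * a t :=
      mul_le_mul_of_nonneg_right hC h0.le
    refine ⟨h0, by linarith only [h2], by linarith only [h3], by linarith only [h4],
      by linarith only [h5, hC'], by linarith only [h6], by linarith only [h7],
      by linarith only [h8]⟩
  have hapos' : ∀ t, T ≤ t → 0 < a t := fun t ht => (key t ht).1
  have hUPchain := chain_up V a T C₂ r hr1 hC₂pos.le hT1 hapos'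
    (fun t ht => ⟨(key t ht).2.1, (key t ht).2.2.2.2.2.1⟩)
  have hDOWNchain := chain_down V a T C₇ ρ hρ1 hC₇pos.le hT1 hapos'
    (fun t ht => ⟨(key t ht).2.2.2.2.1, (key t ht).2.2.2.2.2.2.2⟩)
  have hLOWchain := chain_low a T q hq0 hT1 (fun t ht => (key t ht).2.2.2.2.2.2.1)
  -- upper Potter-type bound for z ≥ 1
  set Cu : ℝ := C₂ * (1/d) * (2:ℝ)^θ with hCudef
  have hCu0 : 0 < Cu := by rw [hCudef]; positivity
  have hUP : ∀ m z, T ≤ m → 1 ≤ z → V (m*z) - V m ≤ Cu * z^θ * a m := by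
    intro m z hm hz
    obtain ⟨n, hn1, hn2⟩ := exists_dyadic hz
    have hm0 : 0 < m := lt_of_lt_of_le one_pos (le_trans hT1 hm)
    have ham : 0 < a m := hapos' m hm
    have h2n0 : (0:ℝ) ≤ 2^n := by positivity
    have hmono : V (m*z) ≤ V (m * 2^n) := hV (mul_le_mul_of_nonneg_left hn1 hm0.le)
    have hchain := (hUPchain n m hm).1
    have hnr : (n:ℝ) * r^n ≤ (1/d) * ((2:ℝ)^θ * z^θ) := by
      have h1 := nat_mul_pow_le (θ₀ + d) d hd n
      have hexp : θ₀ + d + 2*d = θ := by rw [hθdef]; ring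
      rw [hexp, ← hrdef] at h1
      have h2 : ((2:ℝ)^θ)^n = ((2:ℝ)^n)^θ := pow_rpow_comm θ n
      have h3 : ((2:ℝ)^n)^θ ≤ (2*z)^θ := Real.rpow_le_rpow h2n0 hn2 hθpos.le
      have h4 : (2*z)^θ = (2:ℝ)^θ * z^θ := Real.mul_rpow (by norm_num) (by linarith only [hz])
      have h5 : (0:ℝ) ≤ 1/d := by positivity
      calc (n:ℝ) * r^n ≤ (1/d) * ((2:ℝ)^θ)^n := h1
        _ = (1/d) * ((2:ℝ)^n)^θ := by rw [h2]
        _ ≤ (1/d) * ((2*z)^θ) := mul_le_mul_of_nonneg_left h3 h5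
        _ = (1/d) * ((2:ℝ)^θ * z^θ) := by rw [h4]
    have hCam : (0:ℝ) ≤ C₂ * a m := by positivity
    calc V (m*z) - V m ≤ V (m*2^n) - V m := by linarith only [hmono]
      _ ≤ C₂ * n * r^n * a m := hchain
      _ = ((n:ℝ) * r^n) * (C₂ * a m) := by ring
      _ ≤ ((1/d) * ((2:ℝ)^θ * z^θ)) * (C₂ * a m) := mul_le_mul_of_nonneg_right hnr hCam
      _ = Cu * z^θ * a m := by rw [hCudef]; ring
  -- lower bound on a
  have haT : 0 < a T := hapos' T le_rfl
  set cL : ℝ := σ * a T * (2/T)^(γ-1) / C₄ with hcLdef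
  have hcL : 0 < cL := by
    rw [hcLdef]
    have h1 : (0:ℝ) < (2/T)^(γ-1) := Real.rpow_pos_of_pos (by positivity) _
    positivity
  have hL1 : ∀ m, T ≤ m → cL * m^(γ-1) ≤ a m := by
    intro m hm
    have hm0 : 0 < m := lt_of_lt_of_le hT0 hm
    have ham : 0 < a m := hapos' m hm
    have hmT1 : 1 ≤ m/T := (one_le_div hT0).2 hm
    have hlogb0 : 0 ≤ Real.logb 2 (m/T) := Real.logb_nonneg one_lt_two hmT1
    set n : ℕ := ⌊Real.logb 2 (m/T)⌋₊ with hndef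
    have hfl : (n:ℝ) ≤ Real.logb 2 (m/T) := Nat.floor_le hlogb0
    have hfl2 : Real.logb 2 (m/T) < (n:ℝ)+1 := by
      have := Nat.lt_succ_floor (Real.logb 2 (m/T))
      push_cast at this
      rw [hndef]
      push_cast
      linarith only [this]
    have h2n : (2:ℝ)^n ≤ m/T := by
      have h := Real.rpow_le_rpow_of_exponent_le (by norm_num : (1:ℝ) ≤ 2) hfl
      rwa [Real.rpow_logb (by norm_num) (by norm_num) (by positivity), Real.rpow_natCast] at h
    have h2n1 : (2:ℝ)^(n+1) ≤ 2*(m/T) := by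
      have : (2:ℝ)^(n+1) = 2 * (2:ℝ)^n := by ring
      rw [this]
      linarith only [h2n]
    have hTm : T * 2^n ≤ m := by
      rw [mul_comm]
      exact (le_div_iff₀ hT0).1 h2n
    have hmT2 : m ≤ T * 2^(n+1) := by
      have h1 : m/T ≤ (2:ℝ)^(n+1) := by
        have h := Real.rpow_le_rpow_of_exponent_le (by norm_num : (1:ℝ) ≤ 2) hfl2.le
        rw [Real.rpow_logb (by norm_num) (by norm_num) (by positivity)] at h
        have hcast : ((n:ℝ)+1) = ((n+1 : ℕ) : ℝ) := by push_cast; ring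
        rwa [hcast, Real.rpow_natCast] at h
      rw [mul_comm]
      exact (div_le_iff₀ hT0).1 h1
    -- the monotonicity sandwich
    have hs1 : V ((T * 2^(n+1)) * 2) - V (T * 2^(n+1)) ≤ V (m*4) - V m := by
      have hpow : (2:ℝ)^(n+1) = 2^n * 2 := pow_succ 2 n
      have hA : (T * 2^(n+1)) * 2 ≤ m * 4 := by rw [hpow]; linarith only [hTm]
      linarith only [hV hA, hV hmT2]
    have hs2 := (key (T * 2^(n+1)) (by nlinarith only [hT1, hT0, one_le_pow₀ (show (1:ℝ) ≤ 2 by norm_num) (n := n+1)])).2.2.1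
    have hs3 : q^(n+1) * a T ≤ a (T * 2^(n+1)) := hLOWchain (n+1)
    have hs4 : V (m*4) - V m ≤ C₄ * a m := (key m hm).2.2.2.1
    have hq1 : q^(n+1) = ((2:ℝ)^(n+1))^(γ-1) := pow_rpow_comm (γ-1) (n+1)
    have hq2 : ((2:ℝ)^(n+1))^(γ-1) ≥ (2*(m/T))^(γ-1) := by
      apply Real.rpow_le_rpow_of_nonpos (by positivity) h2n1
      linarith only [hγ]
    have hq3 : (2*(m/T))^(γ-1) = (2/T)^(γ-1) * m^(γ-1) := by
      rw [show 2*(m/T) = (2/T)*m by ring]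
      exact Real.mul_rpow (by positivity) hm0.le
    have hchain : σ * (q^(n+1) * a T) ≤ C₄ * a m := by
      calc σ * (q^(n+1) * a T) ≤ σ * a (T * 2^(n+1)) :=
            mul_le_mul_of_nonneg_left hs3 hσpos.le
        _ ≤ V ((T * 2^(n+1)) * 2) - V (T * 2^(n+1)) := hs2
        _ ≤ V (m*4) - V m := hs1
        _ ≤ C₄ * a m := hs4
    have hfin : σ * a T * ((2/T)^(γ-1) * m^(γ-1)) ≤ C₄ * a m := by
      calc σ * a T * ((2/T)^(γ-1) * m^(γ-1)) = σ * ((2*(m/T))^(γ-1) * a T) := by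
            rw [hq3]; ring
        _ ≤ σ * (q^(n+1) * a T) := by
            apply mul_le_mul_of_nonneg_left _ hσpos.le
            apply mul_le_mul_of_nonneg_right _ haT.le
            rw [hq1]; exact hq2
        _ ≤ C₄ * a m := hchain
    rw [hcLdef, div_mul_eq_mul_div, div_le_iff₀ hC₄pos]
    calc σ * a T * (2/T)^(γ-1) * m^(γ-1) = σ * a T * ((2/T)^(γ-1) * m^(γ-1)) := by ring
      _ ≤ C₄ * a m := hfin
      _ = a m * C₄ := by ring
  -- lower Potter-type bound region (i)
  set Cd : ℝ := C₇ * (2:ℝ)^β with hCddef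
  have hCd0 : 0 < Cd := by rw [hCddef]; positivity
  have hDOWN1 : ∀ m z, T ≤ m → 0 < z → z ≤ 1 → 2*T ≤ m*z →
      V m - V (m*z) ≤ Cd * z^(-β) * a m := by
    intro m z hm hz hz1 hmz
    have hm0 : 0 < m := lt_of_lt_of_le hT0 hm
    have ham : 0 < a m := hapos' m hm
    have hzi : 1 ≤ z⁻¹ := by
      rw [le_inv_comm₀ one_pos hz]
      simpa using hz1
    obtain ⟨n, hn1, hn2⟩ := exists_dyadic hzi
    have h2npos : (0:ℝ) < 2^n := by positivity
    have hz2n : 1 ≤ z * 2^n := by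
      have h := mul_le_mul_of_nonneg_left hn1 hz.le
      rwa [mul_inv_cancel₀ hz.ne'] at h
    have hdivle : m / 2^n ≤ m * z := by
      rw [div_le_iff₀ h2npos]
      nlinarith only [hz2n, hm0]
    have hchaincond : T ≤ m / 2^n := by
      rw [le_div_iff₀ h2npos]
      have h1 : T * (2:ℝ)^n ≤ T * (2*z⁻¹) := mul_le_mul_of_nonneg_left hn2 hT0.le
      have h2 : T * (2*z⁻¹) ≤ m := by
        rw [show T * (2*z⁻¹) = (2*T) * z⁻¹ by ring, ← div_eq_mul_inv, div_le_iff₀ hz]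
        linarith only [hmz]
      linarith only [h1, h2]
    have hmono : V (m/2^n) ≤ V (m*z) := hV hdivle
    have hchain := hDOWNchain n m hchaincond
    have hnρ : (n:ℝ) * ρ^n ≤ (2:ℝ)^β * z^(-β) := by
      have h1 := nat_mul_pow_le (-γ ⊔ 0 + 1) 1 one_pos n
      have hexp : -γ ⊔ 0 + 1 + 2*1 = β := by rw [hβdef]; ring
      rw [hexp, ← hρdef] at h1
      have h2 : ((2:ℝ)^β)^n = ((2:ℝ)^n)^β := pow_rpow_comm β n
      have hβ0 : (0:ℝ) ≤ β := by linarith only [hβ3]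
      have h3 : ((2:ℝ)^n)^β ≤ (2*z⁻¹)^β := Real.rpow_le_rpow (by positivity) hn2 hβ0
      have h4 : (2*z⁻¹)^β = (2:ℝ)^β * z^(-β) := by
        rw [Real.mul_rpow (by norm_num) (by positivity), Real.inv_rpow hz.le,
          ← Real.rpow_neg hz.le]
      calc (n:ℝ) * ρ^n ≤ (1/1) * ((2:ℝ)^β)^n := h1
        _ = ((2:ℝ)^n)^β := by rw [h2]; ring
        _ ≤ (2*z⁻¹)^β := h3
        _ = (2:ℝ)^β * z^(-β) := h4
    have hCam : (0:ℝ) ≤ C₇ * a m := by positivity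
    calc V m - V (m*z) ≤ V m - V (m/2^n) := by linarith only [hmono]
      _ ≤ C₇ * n * ρ^n * a m := hchain
      _ = ((n:ℝ) * ρ^n) * (C₇ * a m) := by ring
      _ ≤ ((2:ℝ)^β * z^(-β)) * (C₇ * a m) := mul_le_mul_of_nonneg_right hnρ hCam
      _ = Cd * z^(-β) * a m := by rw [hCddef]; ring
  -- full lower bound
  set K : ℝ := |V (2*T)| + M with hKdef
  have hK0 : 0 ≤ K := by rw [hKdef]; positivity
  set CD : ℝ := Cd + (Cd * (2*T)^(-β) + K/cL) * (2*T)^B with hCDdef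
  have hT2pos : (0:ℝ) < 2*T := by linarith only [hT0]
  have hsumCD : 0 ≤ (Cd * (2*T)^(-β) + K/cL) * (2*T)^B := by
    apply mul_nonneg
    · apply add_nonneg
      · exact mul_nonneg hCd0.le (Real.rpow_nonneg hT2pos.le _)
      · exact div_nonneg hK0 hcL.le
    · exact Real.rpow_nonneg hT2pos.le _
  have hCDpos : 0 < CD := by rw [hCDdef]; linarith only [hsumCD, hCd0]
  have hCdCD : Cd ≤ CD := by rw [hCDdef]; linarith only [hsumCD]
  have hDOWN : ∀ m z, 2*T ≤ m → 0 < z → z ≤ 1 →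
      V m - V (m*z) ≤ CD * z^(-B) * a m := by
    intro m z hm hz hz1
    have hm' : T ≤ m := by linarith only [hm, hT0]
    have hm0 : 0 < m := lt_of_lt_of_le hT0 hm'
    have ham : 0 < a m := hapos' m hm'
    have hm1 : 1 ≤ m := le_trans hT1 hm'
    have hzB : z^(-β) ≤ z^(-B) :=
      Real.rpow_le_rpow_of_exponent_ge hz hz1 (by linarith only [hβB])
    have hzB0 : (0:ℝ) < z^(-B) := Real.rpow_pos_of_pos hz _
    rcases le_or_gt (2*T) (m*z) with hc | hc
    · calc V m - V (m*z) ≤ Cd * z^(-β) * a m := hDOWN1 m z hm' hz hz1 hc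
        _ ≤ Cd * z^(-B) * a m := by
            apply mul_le_mul_of_nonneg_right _ ham.le
            exact mul_le_mul_of_nonneg_left hzB hCd0.le
        _ ≤ CD * z^(-B) * a m := by
            apply mul_le_mul_of_nonneg_right _ ham.le
            exact mul_le_mul_of_nonneg_right hCdCD hzB0.le
    · set z' : ℝ := 2*T/m with hz'def
      have hz'pos : 0 < z' := by rw [hz'def]; positivity
      have hz'le1 : z' ≤ 1 := by rw [hz'def, div_le_one hm0]; exact hm
      have hmz' : m * z' = 2*T := by
        rw [hz'def]; field_simp
      have h1 : V m - V (m*z') ≤ Cd * z'^(-β) * a m :=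
        hDOWN1 m z' hm' hz'pos hz'le1 (le_of_eq hmz'.symm)
      have hz'rpow : z'^(-β) = (2*T)^(-β) * m^β := by
        rw [hz'def, div_eq_mul_inv, Real.mul_rpow hT2pos.le (by positivity),
          Real.inv_rpow hm0.le, Real.rpow_neg hm0.le, inv_inv]
      -- second piece : K bound
      have h2piece : V (m*z') - V (m*z) ≤ K := by
        have ha1 : V (m*z') = V (2*T) := by rw [hmz']
        have ha2 : -M ≤ V (m*z) := hVlow _ (by positivity)
        rw [ha1, hKdef]
        have := le_abs_self (V (2*T))
        linarith only [this, ha2]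
      have hKbd : K ≤ (K/cL) * m^(1-γ) * a m := by
        have hmono := hL1 m hm'
        have hrpow1 : m^(1-γ) * m^(γ-1) = 1 := by
          rw [← Real.rpow_add hm0]; norm_num
        have hstep : (K/cL) * m^(1-γ) * (cL * m^(γ-1)) ≤ (K/cL) * m^(1-γ) * a m := by
          apply mul_le_mul_of_nonneg_left hmono
          apply mul_nonneg (div_nonneg hK0 hcL.le) (Real.rpow_nonneg hm0.le _)
        have heq : (K/cL) * m^(1-γ) * (cL * m^(γ-1)) = K * (cL/cL) * (m^(1-γ) * m^(γ-1)) := by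
          ring
        rw [heq, div_self hcL.ne', hrpow1, mul_one, mul_one] at hstep
        exact hstep
      -- powers of m
      have hmβB : m^β ≤ m^B := Real.rpow_le_rpow_of_exponent_le hm1 hβB
      have hm1γB : m^(1-γ) ≤ m^B := Real.rpow_le_rpow_of_exponent_le hm1 h1γB
      have hmB0 : (0:ℝ) ≤ m^B := Real.rpow_nonneg hm0.le _
      -- m ≤ 2T/z
      have hmle : m ≤ 2*T/z := by
        rw [le_div_iff₀ hz]
        linarith only [hc]
      have hmBle : m^B ≤ (2*T)^B * z^(-B) := by
        have h1 : m^B ≤ (2*T/z)^B := Real.rpow_le_rpow hm0.le hmle hB0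
        have h2 : (2*T/z)^B = (2*T)^B * z^(-B) := by
          rw [div_eq_mul_inv, Real.mul_rpow hT2pos.le (by positivity),
            Real.inv_rpow hz.le, ← Real.rpow_neg hz.le]
        rw [← h2]; exact h1
      -- assemble case 2
      have hfirst : V m - V (m*z') ≤ Cd * (2*T)^(-β) * m^B * a m := by
        calc V m - V (m*z') ≤ Cd * z'^(-β) * a m := h1
          _ = Cd * (2*T)^(-β) * m^β * a m := by rw [hz'rpow]; ring
          _ ≤ Cd * (2*T)^(-β) * m^B * a m := by
              apply mul_le_mul_of_nonneg_right _ ham.le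
              apply mul_le_mul_of_nonneg_left hmβB
              exact mul_nonneg hCd0.le (Real.rpow_nonneg hT2pos.le _)
      have hsecond : V (m*z') - V (m*z) ≤ (K/cL) * m^B * a m := by
        calc V (m*z') - V (m*z) ≤ K := h2piece
          _ ≤ (K/cL) * m^(1-γ) * a m := hKbd
          _ ≤ (K/cL) * m^B * a m := by
              apply mul_le_mul_of_nonneg_right _ ham.le
              exact mul_le_mul_of_nonneg_left hm1γB (div_nonneg hK0 hcL.le)
      have hcomb : V m - V (m*z) ≤ (Cd * (2*T)^(-β) + K/cL) * m^B * a m := by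
        have : V m - V (m*z) = (V m - V (m*z')) + (V (m*z') - V (m*z)) := by ring
        rw [this]
        calc (V m - V (m*z')) + (V (m*z') - V (m*z))
            ≤ Cd * (2*T)^(-β) * m^B * a m + (K/cL) * m^B * a m := by
              linarith only [hfirst, hsecond]
          _ = (Cd * (2*T)^(-β) + K/cL) * m^B * a m := by ring
      have hsum0 : (0:ℝ) ≤ Cd * (2*T)^(-β) + K/cL :=
        add_nonneg (mul_nonneg hCd0.le (Real.rpow_nonneg hT2pos.le _))
          (div_nonneg hK0 hcL.le)
      calc V m - V (m*z) ≤ (Cd * (2*T)^(-β) + K/cL) * m^B * a m := hcomb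
        _ ≤ (Cd * (2*T)^(-β) + K/cL) * ((2*T)^B * z^(-B)) * a m := by
            apply mul_le_mul_of_nonneg_right _ ham.le
            exact mul_le_mul_of_nonneg_left hmBle hsum0
        _ = ((Cd * (2*T)^(-β) + K/cL) * (2*T)^B) * z^(-B) * a m := by ring
        _ ≤ CD * z^(-B) * a m := by
            apply mul_le_mul_of_nonneg_right _ ham.le
            apply mul_le_mul_of_nonneg_right _ hzB0.le
            rw [hCDdef]
            linarith only [hCd0]
  -- bound on psi
  set Cψ : ℝ := 1/θ + 1 + 2/|γ| with hCψdef
  have hCψ0 : 0 < Cψ := by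
    rw [hCψdef]
    have h1 : (0:ℝ) < 1/θ := by positivity
    have h2 : (0:ℝ) ≤ 2/|γ| := by positivity
    linarith only [h1, h2]
  have hψbd : ∀ z : ℝ, 0 < z → |psiAux γ z| ≤ Cψ * (z^(-B) + z^θ) := by
    intro z hz
    have hsum0 : (0:ℝ) ≤ z^(-B) + z^θ := by positivity
    have hone : (1:ℝ) ≤ z^(-B) + z^θ := by
      rcases le_or_gt 1 z with h | h
      · have : (1:ℝ) ≤ z^θ := Real.one_le_rpow h hθpos.le
        have h0 : (0:ℝ) ≤ z^(-B) := by positivity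
        linarith only [this, h0]
      · have : (1:ℝ) ≤ z^(-B) :=
          Real.one_le_rpow_of_pos_of_le_one_of_nonpos hz h.le (by linarith only [hB0])
        have h0 : (0:ℝ) ≤ z^θ := by positivity
        linarith only [this, h0]
    unfold psiAux
    split_ifs with hγ0
    · -- γ = 0 : log
      have hCψge1 : 1 ≤ Cψ := by
        rw [hCψdef]
        have h1 : (0:ℝ) ≤ 1/θ := by positivity
        have h2 : (0:ℝ) ≤ 2/|γ| := by positivity
        linarith only [h1, h2]
      rcases le_or_gt 1 z with h | h
      · rw [abs_of_nonneg (Real.log_nonneg h)]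
        have hlog : Real.log z ≤ z^θ * (1/θ) := by
          have h1 : Real.log (z^θ) ≤ z^θ - 1 := Real.log_le_sub_one_of_pos (by positivity)
          rw [Real.log_rpow hz] at h1
          have h2 : (0:ℝ) < z^θ := by positivity
          rw [← mul_le_mul_iff_right₀ hθpos, mul_comm (z^θ) (1/θ)]
          calc θ * Real.log z ≤ z^θ - 1 := h1
            _ ≤ z^θ := by linarith only [h2]
            _ = θ * (1/θ * z^θ) := by field_simp
        calc Real.log z ≤ z^θ * (1/θ) := hlog
          _ ≤ (z^(-B) + z^θ) * Cψ := by
              apply mul_le_mul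
              · have h0 : (0:ℝ) ≤ z^(-B) := by positivity
                linarith only [h0]
              · rw [hCψdef]
                have h2 : (0:ℝ) ≤ 2/|γ| := by positivity
                linarith only [h2]
              · positivity
              · exact hsum0
          _ = Cψ * (z^(-B) + z^θ) := by ring
      · have habs : |Real.log z| = Real.log z⁻¹ := by
          rw [Real.log_inv, abs_of_nonpos (Real.log_nonpos hz.le h.le)]
        rw [habs]
        have h1 : Real.log z⁻¹ ≤ z⁻¹ - 1 := Real.log_le_sub_one_of_pos (by positivity)
        have h2 : z⁻¹ = z^(-1 : ℝ) := (Real.rpow_neg_one z).symm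
        have h3 : z^(-1:ℝ) ≤ z^(-B) :=
          Real.rpow_le_rpow_of_exponent_ge hz h.le (by linarith only [hB1])
        have h4 : (0:ℝ) ≤ z^θ := by positivity
        have h3' : z⁻¹ ≤ z^(-B) := by rw [h2]; exact h3
        have h5 : Real.log z⁻¹ ≤ z^(-B) + z^θ := by
          linarith only [h1, h3', h4]
        calc Real.log z⁻¹ ≤ 1 * (z^(-B) + z^θ) := by linarith only [h5]
          _ ≤ Cψ * (z^(-B) + z^θ) := mul_le_mul_of_nonneg_right hCψge1 hsum0
    · -- γ ≠ 0
      have hγabs : 0 < |γ| := abs_pos.2 hγ0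
      have hzγ0 : (0:ℝ) ≤ z^γ := by positivity
      have habs : |(z^γ - 1)/γ| ≤ (z^γ + 1)/|γ| := by
        rw [abs_div]
        apply (div_le_div_iff_of_pos_right hγabs).2
        calc |z^γ - 1| ≤ |z^γ| + |(1:ℝ)| := abs_sub _ _
          _ = z^γ + 1 := by rw [abs_of_nonneg hzγ0, abs_one]
      have hzγ : z^γ ≤ z^(-B) + z^θ := by
        rcases le_or_gt 1 z with h | h
        · have h1 : z^γ ≤ z^θ := Real.rpow_le_rpow_of_exponent_le h hγθ
          have h0 : (0:ℝ) ≤ z^(-B) := by positivity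
          linarith only [h1, h0]
        · have h1 : z^γ ≤ z^(-B) :=
            Real.rpow_le_rpow_of_exponent_ge hz h.le (by linarith only [hBγ])
          have h0 : (0:ℝ) ≤ z^θ := by positivity
          linarith only [h1, h0]
      calc |(z^γ - 1)/γ| ≤ (z^γ + 1)/|γ| := habs
        _ ≤ (2*(z^(-B) + z^θ))/|γ| := by
            apply (div_le_div_iff_of_pos_right hγabs).2
            linarith only [hzγ, hone]
        _ = (2/|γ|) * (z^(-B) + z^θ) := by ring
        _ ≤ Cψ * (z^(-B) + z^θ) := by
            apply mul_le_mul_of_nonneg_right _ hsum0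
            rw [hCψdef]
            have h1 : (0:ℝ) ≤ 1/θ := by positivity
            linarith only [h1]
  -- combined pointwise bound
  set Cfin : ℝ := Cu + CD + Cψ with hCfindef
  have hCfin0 : 0 < Cfin := by rw [hCfindef]; linarith only [hCu0, hCDpos, hCψ0]
  have hfinal : ∀ m z, 2*T ≤ m → 0 < z →
      |(V (m*z) - V m)/a m - psiAux γ z| ≤ Cfin * (z^(-B) + z^θ) := by
    intro m z hm hz
    have hm' : T ≤ m := by linarith only [hm, hT0]
    have hm0 : 0 < m := lt_of_lt_of_le hT0 hm'
    have ham : 0 < a m := hapos' m hm'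
    have hsum0 : (0:ℝ) ≤ z^(-B) + z^θ := by positivity
    have htri : |(V (m*z) - V m)/a m - psiAux γ z|
        ≤ |V (m*z) - V m|/a m + |psiAux γ z| := by
      calc |(V (m*z) - V m)/a m - psiAux γ z|
          ≤ |(V (m*z) - V m)/a m| + |psiAux γ z| := abs_sub _ _
        _ = |V (m*z) - V m|/a m + |psiAux γ z| := by
            rw [abs_div, abs_of_pos ham]
    have hX : |V (m*z) - V m| ≤ (Cu + CD) * (z^(-B) + z^θ) * a m := by
      rcases le_or_gt 1 z with h | h
      · have hmono : V m ≤ V (m*z) := by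
          have : m ≤ m * z := le_mul_of_one_le_right hm0.le h
          exact hV this
        rw [abs_of_nonneg (by linarith only [hmono])]
        calc V (m*z) - V m ≤ Cu * z^θ * a m := hUP m z hm' h
          _ ≤ (Cu + CD) * (z^(-B) + z^θ) * a m := by
              apply mul_le_mul_of_nonneg_right _ ham.le
              have h1 : (0:ℝ) ≤ z^(-B) := by positivity
              have h2 : (0:ℝ) ≤ z^θ := by positivity
              nlinarith only [hCu0, hCDpos, h1, h2]
      · have hmono : V (m*z) ≤ V m := by
          have : m * z ≤ m := by nlinarith only [hm0, h, hz]
          exact hV this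
        rw [abs_of_nonpos (by linarith only [hmono])]
        have hneg : -(V (m*z) - V m) = V m - V (m*z) := by ring
        rw [hneg]
        calc V m - V (m*z) ≤ CD * z^(-B) * a m := hDOWN m z hm hz h.le
          _ ≤ (Cu + CD) * (z^(-B) + z^θ) * a m := by
              apply mul_le_mul_of_nonneg_right _ ham.le
              have h1 : (0:ℝ) ≤ z^(-B) := by positivity
              have h2 : (0:ℝ) ≤ z^θ := by positivity
              nlinarith only [hCu0, hCDpos, h1, h2]
    have hXdiv : |V (m*z) - V m|/a m ≤ (Cu + CD) * (z^(-B) + z^θ) := by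
      rw [div_le_iff₀ ham]
      exact hX
    calc |(V (m*z) - V m)/a m - psiAux γ z|
        ≤ |V (m*z) - V m|/a m + |psiAux γ z| := htri
      _ ≤ (Cu + CD) * (z^(-B) + z^θ) + Cψ * (z^(-B) + z^θ) :=
          add_le_add hXdiv (hψbd z hz)
      _ = Cfin * (z^(-B) + z^θ) := by rw [hCfindef]; ring
  -- dominating function setup
  set A : ℝ := (2*Cfin)^p with hAdef
  have hA0 : 0 < A := by rw [hAdef]; positivity
  have hVmeas : Measurable V := hV.measurable
  have hψmeas : Measurable (psiAux γ) := by
    unfold psiAux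
    split_ifs
    · exact Real.measurable_log
    · fun_prop
  -- integrability of the dominating function
  have hgmeas : Measurable (fun z : ℝ => A * (z^((-B)*p) + z^(θ*p)) * Real.exp (-1/z) / z^2) := by
    fun_prop
  have hgint : IntegrableOn (fun z : ℝ => A * (z^((-B)*p) + z^(θ*p)) * Real.exp (-1/z) / z^2)
      (Ioi (0:ℝ)) := by
    rw [← Ioc_union_Ioi_eq_Ioi (zero_le_one (α := ℝ))]
    apply IntegrableOn.union
    · -- bounded on Ioc 0 1
      set N : ℕ := ⌈B*p⌉₊ + 2 with hNdef
      have hNR : B*p + 2 ≤ (N:ℝ) := by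
        have h := Nat.le_ceil (B*p)
        rw [hNdef]; push_cast; linarith only [h]
      have hNpos : (0:ℝ) < (N:ℝ) := by
        have : 0 < B*p + 2 := by nlinarith only [hB0, hp0]
        linarith only [this, hNR]
      apply Measure.integrableOn_of_bounded (M := A * 2 * (N:ℝ)^N)
      · exact (measure_Ioc_lt_top).ne
      · exact hgmeas.aestronglyMeasurable
      · rw [ae_restrict_iff' measurableSet_Ioc]
        filter_upwards with z hz
        have hz0 : (0:ℝ) < z := hz.1
        have hz1 : z ≤ 1 := hz.2
        have hu1 : z^(θ*p) ≤ z^((-B)*p) := by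
          apply Real.rpow_le_rpow_of_exponent_ge hz0 hz1
          nlinarith only [hB0, hp0, hθpos.le, hpθ]
        have hexpb : Real.exp (-1/z) ≤ (N:ℝ)^N * z^(N:ℕ) := by
          have hinv : (0:ℝ) < 1/z := by positivity
          have e1 : (1/z)/(N:ℝ) ≤ Real.exp ((1/z)/(N:ℝ)) := by
            linarith only [Real.add_one_le_exp ((1/z)/(N:ℝ))]
          have e2 : Real.exp (1/z) = (Real.exp ((1/z)/(N:ℝ)))^(N:ℕ) := by
            rw [← Real.exp_nat_mul]
            congr 1
            field_simp
          have e3 : ((1/z)/(N:ℝ))^(N:ℕ) ≤ (Real.exp ((1/z)/(N:ℝ)))^(N:ℕ) :=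
            pow_le_pow_left₀ (by positivity) e1 N
          have e4 : ((1/z)/(N:ℝ))^(N:ℕ) = ((N:ℝ)^N * z^(N:ℕ))⁻¹ := by
            rw [div_div, one_div, ← mul_pow]
            rw [show ((z * (N:ℝ))⁻¹)^(N:ℕ) = (((z*(N:ℝ)))^(N:ℕ))⁻¹ from inv_pow _ _]
            congr 1
            rw [mul_pow]
            ring
          have e5 : ((N:ℝ)^N * z^(N:ℕ))⁻¹ ≤ Real.exp (1/z) := by
            rw [← e4, e2]
            exact e3
          have e6 : Real.exp (-1/z) = (Real.exp (1/z))⁻¹ := by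
            rw [neg_div, Real.exp_neg]
          rw [e6]
          have e7 := inv_anti₀ (b := ((N:ℝ)^N * z^(N:ℕ))⁻¹) (by positivity) e5
          rwa [inv_inv] at e7
        have hnorm : ‖A * (z^((-B)*p) + z^(θ*p)) * Real.exp (-1/z) / z^2‖
            = A * (z^((-B)*p) + z^(θ*p)) * Real.exp (-1/z) / z^2 := by
          rw [Real.norm_eq_abs, abs_of_nonneg (by positivity)]
        rw [hnorm]
        have hzNr : (z:ℝ)^(N:ℕ) = z^((N:ℕ):ℝ) := (Real.rpow_natCast z N).symm
        have hz2r : (z:ℝ)^(2:ℕ) = z^((2:ℕ):ℝ) := (Real.rpow_natCast z 2).symm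
        have hrpowid : z^((-B)*p) * z^((N:ℕ):ℝ) / z^(((2:ℕ)):ℝ) = z^((-B)*p + (N:ℝ) - ((2:ℕ):ℝ)) := by
          rw [← Real.rpow_add hz0, ← Real.rpow_sub hz0]
        have hle1 : z^((-B)*p + (N:ℝ) - ((2:ℕ):ℝ)) ≤ 1 := by
          apply Real.rpow_le_one hz0.le hz1
          have hBpeq : (-B)*p = -(B*p) := by ring
          have hc2 : (((2:ℕ)):ℝ) = 2 := by norm_num
          rw [hBpeq, hc2]
          linarith only [hNR]
        calc A * (z^((-B)*p) + z^(θ*p)) * Real.exp (-1/z) / z^2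
            ≤ A * (z^((-B)*p) + z^((-B)*p)) * ((N:ℝ)^N * z^(N:ℕ)) / z^2 := by
              gcongr
          _ = (A * 2 * (N:ℝ)^N) * (z^((-B)*p) * z^(N:ℕ) / z^(2:ℕ)) := by ring
          _ = (A * 2 * (N:ℝ)^N) * z^((-B)*p + (N:ℝ) - ((2:ℕ):ℝ)) := by
              rw [hzNr, hz2r, hrpowid]
          _ ≤ (A * 2 * (N:ℝ)^N) * 1 := by
              apply mul_le_mul_of_nonneg_left hle1 (by positivity)
          _ = A * 2 * (N:ℝ)^N := mul_one _
    · -- integrable on Ioi 1 by comparison with a power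
      have hexplt : θ*p - 2 < -1 := by
        have : θ*p = p*θ := mul_comm _ _
        linarith only [hpθ, this.ge, this.le]
      have hint0 : IntegrableOn (fun z : ℝ => z^(θ*p - 2)) (Ioi 1) :=
        integrableOn_Ioi_rpow_of_lt hexplt one_pos
      apply Integrable.mono (hint0.const_mul (A*2)) hgmeas.aestronglyMeasurable
      rw [ae_restrict_iff' measurableSet_Ioi]
      filter_upwards with z hz
      have hz1 : (1:ℝ) < z := hz
      have hz0 : (0:ℝ) < z := lt_trans one_pos hz1
      have hu : z^((-B)*p) ≤ z^(θ*p) := by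
        apply Real.rpow_le_rpow_of_exponent_le hz1.le
        have h1 : -B ≤ θ := by linarith only [hB0, hθpos]
        exact mul_le_mul_of_nonneg_right h1 hp0.le
      have hexp1 : Real.exp (-1/z) ≤ 1 := by
        rw [Real.exp_le_one_iff, neg_div]
        have : (0:ℝ) ≤ 1/z := by positivity
        linarith only [this]
      have hn1 : ‖A * (z^((-B)*p) + z^(θ*p)) * Real.exp (-1/z) / z^2‖
          = A * (z^((-B)*p) + z^(θ*p)) * Real.exp (-1/z) / z^2 := by
        rw [Real.norm_eq_abs, abs_of_nonneg (by positivity)]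
      have hn2 : ‖A*2 * z^(θ*p - 2)‖ = A*2 * z^(θ*p - 2) := by
        rw [Real.norm_eq_abs, abs_of_nonneg (by positivity)]
      rw [hn1, hn2]
      have hz2r : (z:ℝ)^(2:ℕ) = z^((2:ℕ):ℝ) := (Real.rpow_natCast z 2).symm
      calc A * (z^((-B)*p) + z^(θ*p)) * Real.exp (-1/z) / z^2
          ≤ A * (z^(θ*p) + z^(θ*p)) * 1 / z^2 := by
            gcongr
          _ = (A*2) * (z^(θ*p) / z^(2:ℕ)) := by ring
          _ = (A*2) * z^(θ*p - 2) := by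
              rw [hz2r, ← Real.rpow_sub hz0]
              norm_num
  -- measurability of the integrands
  have hFmeas : ∀ m : ℝ, AEStronglyMeasurable
      (fun z : ℝ => |(V (m * z) - V m) / a m - psiAux γ z| ^ p * Real.exp (-1 / z) / z ^ 2)
      (volume.restrict (Ioi (0:ℝ))) := by
    intro m
    apply Measurable.aestronglyMeasurable
    have h1 : Measurable fun z : ℝ => V (m*z) := hVmeas.comp (measurable_const_mul m)
    fun_prop
  -- pointwise limit
  have hlim : ∀ᵐ z ∂(volume.restrict (Ioi (0:ℝ))), Tendsto
      (fun m : ℝ => |(V (m * z) - V m) / a m - psiAux γ z| ^ p * Real.exp (-1 / z) / z ^ 2)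
      atTop (nhds 0) := by
    rw [ae_restrict_iff' measurableSet_Ioi]
    filter_upwards with z hz
    have hz0 : (0:ℝ) < z := hz
    have h := hfo' z hz0
    have h1 : Tendsto (fun m : ℝ => (V (m*z) - V m)/a m - psiAux γ z) atTop (nhds 0) := by
      simpa using h.sub_const (psiAux γ z)
    have h2 : Tendsto (fun m : ℝ => |(V (m*z) - V m)/a m - psiAux γ z|) atTop (nhds 0) := by
      simpa using h1.abs
    have h3 : Tendsto (fun m : ℝ => |(V (m*z) - V m)/a m - psiAux γ z|^p) atTop (nhds 0) := by
      have h4 := h2.rpow_const (p := p) (Or.inr hp0.le)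
      rwa [Real.zero_rpow hp0.ne'] at h4
    have h5 := (h3.mul_const (Real.exp (-1/z))).div_const (z^2)
    simpa using h5
  -- eventual domination
  have hbound : ∀ᶠ m : ℝ in atTop, ∀ᵐ z ∂(volume.restrict (Ioi (0:ℝ))),
      ‖|(V (m * z) - V m) / a m - psiAux γ z| ^ p * Real.exp (-1 / z) / z ^ 2‖
      ≤ A * (z^((-B)*p) + z^(θ*p)) * Real.exp (-1/z) / z^2 := by
    filter_upwards [eventually_ge_atTop (2*T)] with m hm
    rw [ae_restrict_iff' measurableSet_Ioi]
    filter_upwards with z hz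
    have hz0 : (0:ℝ) < z := hz
    have hbd := hfinal m z hm hz0
    have h1 : |(V (m*z) - V m)/a m - psiAux γ z|^p ≤ (Cfin * (z^(-B) + z^θ))^p :=
      Real.rpow_le_rpow (abs_nonneg _) hbd hp0.le
    have h2 : (Cfin * (z^(-B) + z^θ))^p ≤ A * (z^((-B)*p) + z^(θ*p)) := by
      have hu : (0:ℝ) ≤ Cfin * z^(-B) := by positivity
      have hv : (0:ℝ) ≤ Cfin * z^θ := by positivity
      have e2 := add_rpow_le hu hv hp0.le
      have e3 : (Cfin * z^(-B))^p = Cfin^p * (z^(-B))^p :=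
        Real.mul_rpow hCfin0.le (by positivity)
      have e4 : (Cfin * z^θ)^p = Cfin^p * (z^θ)^p := Real.mul_rpow hCfin0.le (by positivity)
      have e5 : (z^(-B))^p = z^((-B)*p) := (Real.rpow_mul hz0.le (-B) p).symm
      have e6 : (z^θ)^p = z^(θ*p) := (Real.rpow_mul hz0.le θ p).symm
      have e7 : A = 2^p * Cfin^p := by
        rw [hAdef, Real.mul_rpow (by norm_num) hCfin0.le]
      calc (Cfin * (z^(-B) + z^θ))^p = (Cfin * z^(-B) + Cfin * z^θ)^p := by rw [mul_add]
        _ ≤ 2^p * ((Cfin * z^(-B))^p + (Cfin * z^θ)^p) := e2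
        _ = 2^p * (Cfin^p * z^((-B)*p) + Cfin^p * z^(θ*p)) := by rw [e3, e4, e5, e6]
        _ = A * (z^((-B)*p) + z^(θ*p)) := by rw [e7]; ring
    have hnn : (0:ℝ) ≤ |(V (m * z) - V m) / a m - psiAux γ z| ^ p * Real.exp (-1 / z) / z ^ 2 := by
      positivity
    rw [Real.norm_eq_abs, abs_of_nonneg hnn]
    gcongr
    exact h1.trans h2
  -- dominated convergence
  have hdct := MeasureTheory.tendsto_integral_filter_of_dominated_convergence
    (μ := volume.restrict (Ioi (0:ℝ))) (l := (atTop : Filter ℝ))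
    (F := fun m (z:ℝ) => |(V (m * z) - V m) / a m - psiAux γ z| ^ p * Real.exp (-1 / z) / z ^ 2)
    (f := fun _ => (0:ℝ))
    (bound := fun z : ℝ => A * (z^((-B)*p) + z^(θ*p)) * Real.exp (-1/z) / z^2)
    (Filter.Eventually.of_forall hFmeas) hbound hgint hlim
  simp only [integral_zero] at hdct
  have hres := hdct.rpow_const (p := 1/p) (Or.inr (by positivity))
  rw [Real.zero_rpow (one_div_ne_zero hp0.ne')] at hres
  exact hres
end
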